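/- In the scalar case with s(y,x;β) = y − β and target β₀ = E_q[Y]: the difference between the asymptotic variance without predictions and with predictions equals (1/(1−π)²)·E[((1−π₀(X))³/π₀(X))·(E[Y|X,Ŷ] − E[Y|X])²], which is nonnegative, and it is zero if and only if E[Y|X,Ŷ] = E[Y|X] almost surely. -/

import Mathlib

open MeasureTheory

lemma helperA {α : Type*} {m0 : MeasurableSpace α} (μ : Measure α) [IsFiniteMeasure μ]
    {m : MeasurableSpace α} (hm : m ≤ m0) {R g h : α → ℝ}
    (hRint : Integrable R μ) (hg : StronglyMeasurable[m] g)
    (hRg : Integrable (fun ω => g ω * R ω) μ)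
    (hcond : μ[R|m] =ᵐ[μ] h) :
    Integrable (fun ω => g ω * h ω) μ ∧
      ∫ ω, g ω * R ω ∂μ = ∫ ω, g ω * h ω ∂μ := by
  have key : μ[(fun ω => g ω * R ω)|m] =ᵐ[μ] fun ω => g ω * (μ[R|m]) ω :=
    condExp_mul_of_stronglyMeasurable_left hg hRg hRint
  have key2 : μ[(fun ω => g ω * R ω)|m] =ᵐ[μ] fun ω => g ω * h ω := by
    filter_upwards [key, hcond] with ω h1 h2
    rw [h1, h2]
  constructor
  · exact integrable_condExp.congr key2
  · rw [← integral_condExp (f := fun ω => g ω * R ω) hm]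
    exact integral_congr_ae key2

lemma algebra_aux (a : ℝ) {c b : ℝ} (hb : b ≠ 0) (hc : c ≠ 0) (d : ℝ) :
    (a/c * ((1-b)/b))^2 * d * b = a^2/c^2 * ((1-b)^2 * d + ((1-b)^3/b) * d) := by
  field_simp
  ring

theorem stmt_12 {Ω : Type*} [MeasurableSpace Ω] (μ : Measure Ω) [IsProbabilityMeasure μ]
    (R Y X Yh : Ω → ℝ)
    (hR : Measurable R) (hY : Measurable Y) (hX : Measurable X) (hYh : Measurable Yh)
    (hRbin : ∀ ω, R ω = 0 ∨ R ω = 1)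
    (p0 : ℝ → ℝ) (hp0 : Measurable p0)
    (ε : ℝ) (hε : 0 < ε) (hp0mem : ∀ x, ε ≤ p0 x ∧ p0 x ≤ 1 - ε)
    (pl : ℝ) (hpl : pl = (μ {ω | R ω = 1}).toReal) (hplmem : pl ∈ Set.Ioo (0:ℝ) 1)
    (w0 : ℝ → ℝ) (hw0 : ∀ x, w0 x = (pl / (1 - pl)) * ((1 - p0 x) / p0 x))
    (hMAR : μ[R | MeasurableSpace.comap (fun ω => (Y ω, Yh ω, X ω)) inferInstance]
      =ᵐ[μ] fun ω => p0 (X ω))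
    (hYL2 : MemLp Y 2 μ)
    (mtY m0Y : Ω → ℝ)
    (hmt : mtY =ᵐ[μ] μ[Y | MeasurableSpace.comap (fun ω => (X ω, Yh ω)) inferInstance])
    (hm0 : m0Y =ᵐ[μ] μ[Y | MeasurableSpace.comap X inferInstance])
    (b0 : ℝ) (hb0 : b0 = (1 - pl)⁻¹ * ∫ ω, (1 - R ω) * Y ω ∂μ)
    (hI1 : Integrable (fun ω => R ω * (w0 (X ω))^2 * (Y ω - m0Y ω)^2) μ)
    (hI2 : Integrable (fun ω => R ω * (w0 (X ω))^2 * (Y ω - mtY ω)^2) μ)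
    (hI3 : Integrable (fun ω => (1 - p0 (X ω))^2 * (mtY ω - m0Y ω)^2) μ)
    (hI4 : Integrable (fun ω => (1 - R ω) * (m0Y ω - b0)^2) μ)
    (hI5 : Integrable (fun ω => ((1 - p0 (X ω))^3 / p0 (X ω)) * (mtY ω - m0Y ω)^2) μ) :
    (((1/pl^2) * ∫ ω, R ω * (w0 (X ω))^2 * (Y ω - m0Y ω)^2 ∂μ
        + (1/(1-pl)^2) * ∫ ω, (1 - R ω) * (m0Y ω - b0)^2 ∂μ)
      - ((1/pl^2) * ∫ ω, R ω * (w0 (X ω))^2 * (Y ω - mtY ω)^2 ∂μ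
        + (1/(1-pl)^2) * ∫ ω, (1 - p0 (X ω))^2 * (mtY ω - m0Y ω)^2 ∂μ
        + (1/(1-pl)^2) * ∫ ω, (1 - R ω) * (m0Y ω - b0)^2 ∂μ)
      = (1/(1-pl)^2) * ∫ ω, ((1 - p0 (X ω))^3 / p0 (X ω)) * (mtY ω - m0Y ω)^2 ∂μ)
    ∧ (0 ≤ (1/(1-pl)^2) * ∫ ω, ((1 - p0 (X ω))^3 / p0 (X ω)) * (mtY ω - m0Y ω)^2 ∂μ)
    ∧ ((1/(1-pl)^2) * ∫ ω, ((1 - p0 (X ω))^3 / p0 (X ω)) * (mtY ω - m0Y ω)^2 ∂μ = 0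
        ↔ mtY =ᵐ[μ] m0Y) := by
  obtain ⟨hpl0, hpl1⟩ := hplmem
  have hplne : pl ≠ 0 := ne_of_gt hpl0
  have h1plne : (1 : ℝ) - pl ≠ 0 := by intro h; simp only [sub_eq_zero] at h; linarith
  -- basic pointwise facts about p0
  have hp0pos : ∀ x, 0 < p0 x := fun x => lt_of_lt_of_le hε (hp0mem x).1
  have hp0ne : ∀ x, p0 x ≠ 0 := fun x => ne_of_gt (hp0pos x)
  have hp0le1 : ∀ x, p0 x ≤ 1 := fun x => by linarith [(hp0mem x).2]
  have h1p0pos : ∀ x, ε ≤ 1 - p0 x := fun x => by linarith [(hp0mem x).2]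
  have h1p0nonneg : ∀ x, 0 ≤ 1 - p0 x := fun x => le_trans hε.le (h1p0pos x)
  have h1p0le1 : ∀ x, 1 - p0 x ≤ 1 := fun x => by linarith [(hp0mem x).1, hε]
  -- σ-algebras
  set m3 : MeasurableSpace Ω := MeasurableSpace.comap (fun ω => (Y ω, Yh ω, X ω)) inferInstance
    with hm3def
  set m2 : MeasurableSpace Ω := MeasurableSpace.comap (fun ω => (X ω, Yh ω)) inferInstance
    with hm2def
  set m1 : MeasurableSpace Ω := MeasurableSpace.comap X inferInstance with hm1def
  have hm3le : m3 ≤ _ := (hY.prodMk (hYh.prodMk hX)).comap_le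
  have hm2le : m2 ≤ _ := (hX.prodMk hYh).comap_le
  have hm1le : m1 ≤ _ := hX.comap_le
  have htriple : Measurable[m3] (fun ω => (Y ω, Yh ω, X ω)) := comap_measurable _
  have hpair : Measurable[m2] (fun ω => (X ω, Yh ω)) := comap_measurable _
  have hXm2 : Measurable[m2] X := measurable_fst.comp hpair
  have hYhm2 : Measurable[m2] Yh := measurable_snd.comp hpair
  have hYm3 : Measurable[m3] Y := (measurable_fst.comp htriple : _)
  have hXm3 : Measurable[m3] X := (measurable_snd.comp (measurable_snd.comp htriple) : _)
  have hYhm3 : Measurable[m3] Yh := (measurable_fst.comp (measurable_snd.comp htriple) : _)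
  have hm23 : m2 ≤ m3 := Measurable.comap_le (hXm3.prodMk hYhm3)
  have hm12 : m1 ≤ m2 := Measurable.comap_le hXm2
  -- conditional expectations
  set mt' : Ω → ℝ := μ[Y | m2] with hmt'def
  set m0' : Ω → ℝ := μ[Y | m1] with hm0'def
  have hmt2 : mtY =ᵐ[μ] mt' := hmt
  have hm02 : m0Y =ᵐ[μ] m0' := hm0
  have hmtSM : StronglyMeasurable[m2] mt' := stronglyMeasurable_condExp
  have hm0SM : StronglyMeasurable[m1] m0' := stronglyMeasurable_condExp
  have hmtM2 : Measurable[m2] mt' := hmtSM.measurable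
  have hm0M2 : Measurable[m2] m0' := (hm0SM.mono hm12).measurable
  have hmtM := (hmtSM.mono hm2le).measurable
  have hm0M := ((hm0SM.mono hm12).mono hm2le).measurable
  have intY : Integrable Y μ := hYL2.integrable one_le_two
  have intmt : Integrable mt' μ := integrable_condExp
  have hcondzero : μ[(Y - mt')|m2] =ᵐ[μ] (fun _ => (0:ℝ)) := by
    have hsub := condExp_sub (m := m2) (μ := μ) intY intmt
    have hfix : μ[mt'|m2] = mt' := condExp_of_stronglyMeasurable hm2le hmtSM intmt
    filter_upwards [hsub] with ω hω
    rw [hω, Pi.sub_apply, hfix]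
    show mt' ω - mt' ω = (0:ℝ)
    exact sub_self _
  clear_value m1 m2 m3 mt' m0'
  -- integrable R
  have intR : Integrable R μ := by
    refine (integrable_const (1:ℝ)).mono' hR.aestronglyMeasurable (ae_of_all _ fun ω => ?_)
    rcases hRbin ω with h | h <;> simp [h]
  have hRabs : ∀ ω, |R ω| ≤ 1 := fun ω => by rcases hRbin ω with h | h <;> simp [h]
  -- measurability of w0
  have hw0M : Measurable (fun x => w0 x) := by
    have : (fun x => w0 x) = fun x => (pl / (1 - pl)) * ((1 - p0 x) / p0 x) := funext hw0
    rw [this]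
    exact (((measurable_const.sub hp0).div hp0).const_mul _)
  have hw0Xm2 : Measurable[m2] (fun ω => w0 (X ω)) := hw0M.comp hXm2
  have hp0Xm2 : Measurable[m2] (fun ω => p0 (X ω)) := hp0.comp hXm2
  have hw0Xm3 : Measurable[m3] (fun ω => w0 (X ω)) := hw0M.comp hXm3
  have hw0X := hw0M.comp hX
  -- the main auxiliary functions
  set D : Ω → ℝ := fun ω => (mt' ω - m0' ω)^2 with hDdef
  set h1 : Ω → ℝ := fun ω => (w0 (X ω))^2 * (Y ω - m0' ω)^2 with hh1def
  set h2 : Ω → ℝ := fun ω => (w0 (X ω))^2 * (Y ω - mt' ω)^2 with hh2def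
  set g3 : Ω → ℝ := fun ω => (w0 (X ω))^2 * D ω with hg3def
  set g4 : Ω → ℝ := fun ω => (w0 (X ω))^2 * (mt' ω - m0' ω) * (Y ω - mt' ω) with hg4def
  -- measurability (ambient)
  have hDM := (hmtM.sub hm0M).pow_const 2
  have hg3M := (hw0X.pow_const 2).mul hDM
  have hg4M := ((hw0X.pow_const 2).mul (hmtM.sub hm0M)).mul (hY.sub hmtM)
  have hh2M := (hw0X.pow_const 2).mul ((hY.sub hmtM).pow_const 2)
  -- m-measurability
  have hDm2 : Measurable[m2] D := (hmtM2.sub hm0M2).pow_const 2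
  have hmtm3 : Measurable[m3] mt' := hmtM2.mono hm23 le_rfl
  have hm0m3 : Measurable[m3] m0' := hm0M2.mono hm23 le_rfl
  have hh1m3 : StronglyMeasurable[m3] h1 :=
    (((hw0Xm3.pow_const 2).mul ((hYm3.sub hm0m3).pow_const 2))).stronglyMeasurable
  have hh2m3 : StronglyMeasurable[m3] h2 :=
    (((hw0Xm3.pow_const 2).mul ((hYm3.sub hmtm3).pow_const 2))).stronglyMeasurable
  have hg3m3 : StronglyMeasurable[m3] g3 :=
    ((hw0Xm3.pow_const 2).mul (hDm2.mono hm23 le_rfl)).stronglyMeasurable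
  have hg4m3 : StronglyMeasurable[m3] g4 :=
    (((hw0Xm3.pow_const 2).mul (hmtm3.sub hm0m3)).mul (hYm3.sub hmtm3)).stronglyMeasurable
  -- integrability transfers to primed versions
  have I3' : Integrable (fun ω => (1 - p0 (X ω))^2 * D ω) μ := by
    refine hI3.congr ?_
    filter_upwards [hmt2, hm02] with ω e1 e2
    simp only [hDdef, e1, e2]
  have I5' : Integrable (fun ω => ((1 - p0 (X ω))^3 / p0 (X ω)) * D ω) μ := by
    refine hI5.congr ?_
    filter_upwards [hmt2, hm02] with ω e1 e2
    simp only [hDdef, e1, e2]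
  -- w0 squared bound
  have hw0sq : ∀ x, (w0 x)^2 ≤ ((pl/(1-pl))^2 * ε⁻¹^2) * (1 - p0 x)^2 := by
    intro x
    rw [hw0 x]
    have hp := hp0pos x
    have hb : ε^2 ≤ (p0 x)^2 := by nlinarith [(hp0mem x).1, hε.le]
    have hsplit : (pl/(1-pl) * ((1 - p0 x)/p0 x))^2
        = (pl/(1-pl))^2 * ((1 - p0 x)^2/(p0 x)^2) := by
      ring
    rw [hsplit]
    have hdiv : (1 - p0 x)^2 / (p0 x)^2 ≤ ε⁻¹^2 * (1 - p0 x)^2 := by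
      rw [div_le_iff₀ (pow_pos hp 2), inv_pow]
      calc (1 - p0 x)^2 = (ε^2)⁻¹ * (ε^2 * (1 - p0 x)^2) := by field_simp
        _ ≤ (ε^2)⁻¹ * ((p0 x)^2 * (1 - p0 x)^2) := by
            refine mul_le_mul_of_nonneg_left ?_ (by positivity)
            exact mul_le_mul_of_nonneg_right hb (sq_nonneg _)
        _ = (ε^2)⁻¹ * (1 - p0 x)^2 * (p0 x)^2 := by ring
    calc (pl/(1-pl))^2 * ((1-p0 x)^2/(p0 x)^2)
        ≤ (pl/(1-pl))^2 * (ε⁻¹^2 * (1-p0 x)^2) :=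
          mul_le_mul_of_nonneg_left hdiv (sq_nonneg _)
      _ = ((pl/(1-pl))^2 * ε⁻¹^2) * (1-p0 x)^2 := by ring
  -- integrability of g3
  have intg3 : Integrable g3 μ := by
    refine (I3'.const_mul ((pl/(1-pl))^2 * ε⁻¹^2)).mono' hg3M.aestronglyMeasurable
      (ae_of_all _ fun ω => ?_)
    have hD0 : (0:ℝ) ≤ D ω := sq_nonneg _
    have : g3 ω ≤ ((pl/(1-pl))^2 * ε⁻¹^2) * ((1 - p0 (X ω))^2 * D ω) := by
      simp only [hg3def]
      calc (w0 (X ω))^2 * D ω ≤ (((pl/(1-pl))^2 * ε⁻¹^2) * (1 - p0 (X ω))^2) * D ω :=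
            mul_le_mul_of_nonneg_right (hw0sq (X ω)) hD0
        _ = ((pl/(1-pl))^2 * ε⁻¹^2) * ((1 - p0 (X ω))^2 * D ω) := by ring
    have h0 : (0:ℝ) ≤ g3 ω := by simp only [hg3def]; positivity
    rw [Real.norm_eq_abs, abs_of_nonneg h0]
    exact this
  have Rg3int : Integrable (fun ω => g3 ω * R ω) μ := by
    refine intg3.mono' (hg3M.mul hR).aestronglyMeasurable (ae_of_all _ fun ω => ?_)
    have h0 : (0:ℝ) ≤ g3 ω := by simp only [hg3def]; positivity
    rw [Real.norm_eq_abs, abs_mul, abs_of_nonneg h0]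
    calc g3 ω * |R ω| ≤ g3 ω * 1 := mul_le_mul_of_nonneg_left (hRabs ω) h0
      _ = g3 ω := mul_one _
  -- R-integrability of h1, h2 (from the hypotheses)
  have RH1 : Integrable (fun ω => h1 ω * R ω) μ := by
    refine hI1.congr ?_
    filter_upwards [hm02] with ω e
    rw [e]; simp only [hh1def]; ring
  have RH2 : Integrable (fun ω => h2 ω * R ω) μ := by
    refine hI2.congr ?_
    filter_upwards [hmt2] with ω e
    rw [e]; simp only [hh2def]; ring
  -- transfer R to p0 via MAR (helperA with m3)
  obtain ⟨P1int, P1eq⟩ := helperA μ hm3le intR hh1m3 RH1 hMAR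
  obtain ⟨P2int, P2eq⟩ := helperA μ hm3le intR hh2m3 RH2 hMAR
  obtain ⟨P3int, P3eq⟩ := helperA μ hm3le intR hg3m3 Rg3int hMAR
  -- integrability of h2 itself
  have inth2 : Integrable h2 μ := by
    refine (P2int.const_mul ε⁻¹).mono' hh2M.aestronglyMeasurable (ae_of_all _ fun ω => ?_)
    have h0 : (0:ℝ) ≤ h2 ω := by simp only [hh2def]; positivity
    rw [Real.norm_eq_abs, abs_of_nonneg h0]
    have hεp : ε ≤ p0 (X ω) := (hp0mem (X ω)).1
    rw [← mul_le_mul_iff_right₀ hε]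
    calc ε * h2 ω ≤ p0 (X ω) * h2 ω := mul_le_mul_of_nonneg_right hεp h0
      _ = ε * (ε⁻¹ * (h2 ω * p0 (X ω))) := by field_simp
  -- integrability of g4
  have intg4 : Integrable g4 μ := by
    refine ((intg3.add inth2).const_mul (1/2 : ℝ)).mono' hg4M.aestronglyMeasurable
      (ae_of_all _ fun ω => ?_)
    rw [Real.norm_eq_abs, abs_le]
    simp only [hg4def, hg3def, hh2def, hDdef, Pi.add_apply]
    constructor
    · nlinarith [sq_nonneg (w0 (X ω) * (mt' ω - m0' ω) + w0 (X ω) * (Y ω - mt' ω))]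
    · nlinarith [sq_nonneg (w0 (X ω) * (mt' ω - m0' ω) - w0 (X ω) * (Y ω - mt' ω))]
  have Rg4int : Integrable (fun ω => g4 ω * R ω) μ := by
    refine intg4.abs.mono' (hg4M.mul hR).aestronglyMeasurable (ae_of_all _ fun ω => ?_)
    rw [Real.norm_eq_abs, abs_mul]
    calc |g4 ω| * |R ω| ≤ |g4 ω| * 1 := mul_le_mul_of_nonneg_left (hRabs ω) (abs_nonneg _)
      _ = |g4 ω| := mul_one _
  obtain ⟨P4int, P4eq⟩ := helperA μ hm3le intR hg4m3 Rg4int hMAR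
  -- the cross term vanishes
  set G : Ω → ℝ := fun ω => p0 (X ω) * ((w0 (X ω))^2 * (mt' ω - m0' ω)) with hGdef
  have hGm2 : StronglyMeasurable[m2] G :=
    (hp0Xm2.mul ((hw0Xm2.pow_const 2).mul (hmtM2.sub hm0M2))).stronglyMeasurable
  have intYmt : Integrable (Y - mt') μ := intY.sub intmt
  have he : (fun ω => G ω * (Y - mt') ω) = fun ω => g4 ω * p0 (X ω) := by
    funext ω; simp only [hGdef, hg4def, Pi.sub_apply]; ring
  have intGR : Integrable (fun ω => G ω * (Y - mt') ω) μ := by rw [he]; exact P4int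
  obtain ⟨_, Geq⟩ := helperA μ hm2le intYmt hGm2 intGR hcondzero
  rw [he] at Geq
  have hcross0 : ∫ ω, g4 ω * p0 (X ω) ∂μ = 0 := by
    rw [Geq]; simp only [mul_zero, integral_zero]
  have Rg4zero : ∫ ω, g4 ω * R ω ∂μ = 0 := by rw [P4eq]; exact hcross0
  -- pointwise decomposition
  have hdecomp : (fun ω => h1 ω * R ω)
      = fun ω => h2 ω * R ω + (g3 ω * R ω + 2 * (g4 ω * R ω)) := by
    funext ω; simp only [hh1def, hh2def, hg3def, hg4def, hDdef]; ring
  have Rg4int2 : Integrable (fun ω => 2 * (g4 ω * R ω)) μ := Rg4int.const_mul 2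
  have RgSum : Integrable (fun ω => g3 ω * R ω + 2 * (g4 ω * R ω)) μ := Rg3int.add Rg4int2
  have hint1 : ∫ ω, h1 ω * R ω ∂μ
      = ∫ ω, h2 ω * R ω ∂μ + (∫ ω, g3 ω * R ω ∂μ + 2 * ∫ ω, g4 ω * R ω ∂μ) := by
    rw [hdecomp, integral_add RH2 RgSum, integral_add Rg3int Rg4int2, integral_const_mul]
  have eA : ∫ ω, h1 ω * R ω ∂μ - ∫ ω, h2 ω * R ω ∂μ = ∫ ω, g3 ω * p0 (X ω) ∂μ := by
    rw [hint1, Rg4zero, P3eq]; ring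
  -- pointwise algebra for the final identity
  have hptwise : (fun ω => g3 ω * p0 (X ω))
      = fun ω => (pl^2/(1-pl)^2) * ((1 - p0 (X ω))^2 * D ω
          + ((1 - p0 (X ω))^3 / p0 (X ω)) * D ω) := by
    funext ω
    simp only [hg3def]
    rw [hw0 (X ω)]
    exact algebra_aux pl (hp0ne (X ω)) h1plne (D ω)
  have key : ∫ ω, g3 ω * p0 (X ω) ∂μ
      = (pl^2/(1-pl)^2) * ((∫ ω, (1 - p0 (X ω))^2 * D ω ∂μ)
          + ∫ ω, ((1 - p0 (X ω))^3 / p0 (X ω)) * D ω ∂μ) := by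
    rw [hptwise, integral_const_mul, integral_add I3' I5']
  -- convert the statement integrals
  have T1eq : ∫ ω, R ω * (w0 (X ω))^2 * (Y ω - m0Y ω)^2 ∂μ = ∫ ω, h1 ω * R ω ∂μ := by
    refine integral_congr_ae ?_
    filter_upwards [hm02] with ω e
    rw [e]; simp only [hh1def]; ring
  have T2eq : ∫ ω, R ω * (w0 (X ω))^2 * (Y ω - mtY ω)^2 ∂μ = ∫ ω, h2 ω * R ω ∂μ := by
    refine integral_congr_ae ?_
    filter_upwards [hmt2] with ω e
    rw [e]; simp only [hh2def]; ring
  have T3eq : ∫ ω, (1 - p0 (X ω))^2 * (mtY ω - m0Y ω)^2 ∂μ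
      = ∫ ω, (1 - p0 (X ω))^2 * D ω ∂μ := by
    refine integral_congr_ae ?_
    filter_upwards [hmt2, hm02] with ω e1 e2
    simp only [hDdef, e1, e2]
  have T5eq : ∫ ω, ((1 - p0 (X ω))^3 / p0 (X ω)) * (mtY ω - m0Y ω)^2 ∂μ
      = ∫ ω, ((1 - p0 (X ω))^3 / p0 (X ω)) * D ω ∂μ := by
    refine integral_congr_ae ?_
    filter_upwards [hmt2, hm02] with ω e1 e2
    simp only [hDdef, e1, e2]
  have final1 : (1/pl^2) * (∫ ω, h1 ω * R ω ∂μ) - (1/pl^2) * (∫ ω, h2 ω * R ω ∂μ)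
      = (1/(1-pl)^2) * (∫ ω, (1 - p0 (X ω))^2 * D ω ∂μ)
        + (1/(1-pl)^2) * (∫ ω, ((1 - p0 (X ω))^3 / p0 (X ω)) * D ω ∂μ) := by
    have hstep : (1/pl^2) * (∫ ω, h1 ω * R ω ∂μ) - (1/pl^2) * (∫ ω, h2 ω * R ω ∂μ)
        = (1/pl^2) * (∫ ω, h1 ω * R ω ∂μ - ∫ ω, h2 ω * R ω ∂μ) := by ring
    rw [hstep, eA, key]
    field_simp
  -- nonnegativity of the integrand
  have hnn : ∀ ω, 0 ≤ ((1 - p0 (X ω))^3 / p0 (X ω)) * (mtY ω - m0Y ω)^2 := fun ω =>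
    mul_nonneg (div_nonneg (pow_nonneg (h1p0nonneg (X ω)) 3) (hp0pos (X ω)).le) (sq_nonneg _)
  refine ⟨?_, ?_, ?_⟩
  · rw [T1eq, T2eq, T3eq, T5eq]
    linarith [final1]
  · exact mul_nonneg (by positivity) (integral_nonneg hnn)
  · constructor
    · intro hzero
      have hc : (1:ℝ)/(1-pl)^2 ≠ 0 := by positivity
      have hint0 : ∫ ω, ((1 - p0 (X ω))^3 / p0 (X ω)) * (mtY ω - m0Y ω)^2 ∂μ = 0 := by
        rcases mul_eq_zero.1 hzero with h | h
        · exact absurd h hc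
        · exact h
      have hae := (integral_eq_zero_iff_of_nonneg hnn hI5).1 hint0
      filter_upwards [hae] with ω hω
      have hcoef : (1 - p0 (X ω))^3 / p0 (X ω) ≠ 0 := by
        apply div_ne_zero
        · exact pow_ne_zero _ (by linarith [h1p0pos (X ω)])
        · exact hp0ne (X ω)
      have hsq : (mtY ω - m0Y ω)^2 = 0 := by
        rcases mul_eq_zero.1 hω with h | h
        · exact absurd h hcoef
        · exact h
      have := pow_eq_zero_iff (n := 2) (by norm_num) |>.1 hsq
      linarith [sub_eq_zero.1 this]
    · intro hae
      have : ∫ ω, ((1 - p0 (X ω))^3 / p0 (X ω)) * (mtY ω - m0Y ω)^2 ∂μ = ∫ (_ : Ω), (0:ℝ) ∂μ := by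
        refine integral_congr_ae ?_
        filter_upwards [hae] with ω hω
        rw [hω]; simp
      rw [this]; simp
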